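/- Let B be a real Banach space and ξ : ℕ → B a Schauder basis of B, with coefficient functionals cᵢ. Assume: (A1) for every x ∈ B and every n ∈ ℕ, ‖∑_{i<n} cᵢ(x) • ξ(i)‖ ≤ ‖x‖; (A2) for every sequence of scalars d : ℕ → ℝ and every b > 0, if ‖∑_{i<n} d(i) • ξ(i)‖ ≤ b for all n ∈ ℕ, then the partial sums ∑_{i<n} d(i) • ξ(i) converge in norm to some x ∈ B with ‖x‖ ≤ b; (A3) for every continuous linear functional f on B, ‖f − ∑_{i<n} f(ξ(i)) • cᵢ(·)‖ → 0 in the dual norm as n → ∞. Then B is reflexive: the canonical isometric embedding of B into its double dual B** is surjective. -/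

import Mathlib

open Filter Topology

/-- **Rabin's theorem.** Let `ξ` be a Schauder basis of a real Banach space
`B`, with (continuous) coefficient functionals `φ i x = c x i`. Under assumptions
(A1) monotone norm bound on partial sums, (A2) boundedly-supported coefficient sequences
give convergent series with the same norm bound, and (A3) every continuous functional is
the dual-norm limit of its finite basis expansions, the space `B` is reflexive: the
canonical embedding into the double dual is surjective. -/
theorem schauder_basis_reflexive
    {B : Type*} [NormedAddCommGroup B] [NormedSpace ℝ B] [CompleteSpace B]
    (ξ : ℕ → B) (c : B → ℕ → ℝ)
    (hconv : ∀ x : B,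
      Tendsto (fun n => ∑ i ∈ Finset.range n, c x i • ξ i) atTop (𝓝 x))
    (huniq : ∀ (x : B) (d : ℕ → ℝ),
      Tendsto (fun n => ∑ i ∈ Finset.range n, d i • ξ i) atTop (𝓝 x) → d = c x)
    (φ : ℕ → B →L[ℝ] ℝ) (hφ : ∀ (i : ℕ) (x : B), φ i x = c x i)
    (A1 : ∀ (x : B) (n : ℕ), ‖∑ i ∈ Finset.range n, c x i • ξ i‖ ≤ ‖x‖)
    (A2 : ∀ (d : ℕ → ℝ) (b : ℝ), 0 < b →
      (∀ n : ℕ, ‖∑ i ∈ Finset.range n, d i • ξ i‖ ≤ b) →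
      ∃ x : B, Tendsto (fun n => ∑ i ∈ Finset.range n, d i • ξ i) atTop (𝓝 x) ∧ ‖x‖ ≤ b)
    (A3 : ∀ f : B →L[ℝ] ℝ,
      Tendsto (fun n => ‖f - ∑ i ∈ Finset.range n, f (ξ i) • φ i‖) atTop (𝓝 0)) :
    Function.Surjective (NormedSpace.inclusionInDoubleDual ℝ B) := by
  intro F
  -- dual bound: the adjoint partial sums have norm ≤ ‖f‖
  have hdual : ∀ (f : B →L[ℝ] ℝ) (n : ℕ),
      ‖∑ i ∈ Finset.range n, f (ξ i) • φ i‖ ≤ ‖f‖ := by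
    intro f n
    apply ContinuousLinearMap.opNorm_le_bound _ (norm_nonneg f)
    intro x
    have h1 : (∑ i ∈ Finset.range n, f (ξ i) • φ i) x
        = f (∑ i ∈ Finset.range n, c x i • ξ i) := by
      simp [ContinuousLinearMap.sum_apply, hφ, map_sum, mul_comm]
    rw [h1]
    calc ‖f (∑ i ∈ Finset.range n, c x i • ξ i)‖
        ≤ ‖f‖ * ‖∑ i ∈ Finset.range n, c x i • ξ i‖ := f.le_opNorm _
      _ ≤ ‖f‖ * ‖x‖ := by gcongr; exact A1 x n
  set d : ℕ → ℝ := fun i => F (φ i) with hd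
  -- bound on the partial sums of d
  have hbound : ∀ n : ℕ, ‖∑ i ∈ Finset.range n, d i • ξ i‖ ≤ ‖F‖ := by
    intro n
    set y : B := ∑ i ∈ Finset.range n, d i • ξ i with hy
    have hJ : ‖(NormedSpace.inclusionInDoubleDualLi ℝ (E := B)) y‖ ≤ ‖F‖ := by
      apply ContinuousLinearMap.opNorm_le_bound _ (norm_nonneg F)
      intro f
      have h1 : (NormedSpace.inclusionInDoubleDualLi ℝ (E := B)) y f = f y := rfl
      have h2 : f y = F (∑ i ∈ Finset.range n, f (ξ i) • φ i) := by
        simp [hy, hd, map_sum, map_smul, smul_eq_mul, mul_comm]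
      rw [h1, h2]
      calc ‖F (∑ i ∈ Finset.range n, f (ξ i) • φ i)‖
          ≤ ‖F‖ * ‖∑ i ∈ Finset.range n, f (ξ i) • φ i‖ := F.le_opNorm _
        _ ≤ ‖F‖ * ‖f‖ := by gcongr; exact hdual f n
    calc ‖y‖ = ‖(NormedSpace.inclusionInDoubleDualLi ℝ (E := B)) y‖ :=
      ((NormedSpace.inclusionInDoubleDualLi ℝ (E := B)).norm_map y).symm
    _ ≤ ‖F‖ := hJ
  have hbound' : ∀ n : ℕ, ‖∑ i ∈ Finset.range n, d i • ξ i‖ ≤ ‖F‖ + 1 := fun n =>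
    (hbound n).trans (by linarith)
  obtain ⟨x, hx, -⟩ := A2 d (‖F‖ + 1) (by positivity) hbound'
  have hcx : d = c x := huniq x d hx
  refine ⟨x, ?_⟩
  ext f
  have hS : Tendsto (fun n => (∑ i ∈ Finset.range n, f (ξ i) • φ i : B →L[ℝ] ℝ))
      atTop (𝓝 f) := by
    rw [tendsto_iff_norm_sub_tendsto_zero]
    simpa [norm_sub_rev] using A3 f
  have h1 : Tendsto (fun n => F (∑ i ∈ Finset.range n, f (ξ i) • φ i)) atTop (𝓝 (F f)) :=
    (F.continuous.tendsto f).comp hS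
  have h2 : Tendsto (fun n => f (∑ i ∈ Finset.range n, c x i • ξ i)) atTop (𝓝 (f x)) :=
    (f.continuous.tendsto x).comp (hconv x)
  have heq : (fun n => F (∑ i ∈ Finset.range n, f (ξ i) • φ i))
      = fun n => f (∑ i ∈ Finset.range n, c x i • ξ i) := by
    funext n
    have : F (∑ i ∈ Finset.range n, f (ξ i) • φ i)
        = ∑ i ∈ Finset.range n, f (ξ i) * d i := by
      simp [map_sum, map_smul, smul_eq_mul, hd]
    rw [this, map_sum]
    simp [map_smul, smul_eq_mul, hcx, mul_comm]
  rw [heq] at h1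
  have : F f = f x := tendsto_nhds_unique h1 h2
  simpa [NormedSpace.inclusionInDoubleDual] using this.symm
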